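/- Let m ≥ 2 and let φ : ℝ → ℝ be a Yamada–Watanabe function of order m, i.e. φ is twice continuously differentiable with (1) φ(0) = φ'(0) = 0; (2) φ(−x) = φ(x) for all x; (3) φ''(x) = 0 for all x outside [−2/m, −1/m²] ∪ [1/m², 2/m]; (4) 0 ≤ φ''(x)·|x| ≤ 1/log m for all x; (5) the integral of φ'' over [1/m², 2/m] equals 1. Then |x| − 2/m ≤ φ(x) ≤ |x| for all x ∈ ℝ. -/

import Mathlib

open Real MeasureTheory intervalIntegral

/-- A Yamada–Watanabe function of order `m ≥ 2` satisfies `|x| - 2/m ≤ φ(x) ≤ |x|`. -/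
theorem yamada_watanabe_abs_bounds (m : ℝ) (hm : 2 ≤ m) (φ : ℝ → ℝ)
    (hC2 : ContDiff ℝ 2 φ)
    (h0 : φ 0 = 0) (h0' : deriv φ 0 = 0)
    (heven : ∀ x : ℝ, φ (-x) = φ x)
    (hsupp : ∀ x : ℝ,
      x ∉ Set.Icc (-(2 / m)) (-(1 / m ^ 2)) ∪ Set.Icc (1 / m ^ 2) (2 / m) →
      deriv (deriv φ) x = 0)
    (hbound : ∀ x : ℝ,
      0 ≤ deriv (deriv φ) x * |x| ∧ deriv (deriv φ) x * |x| ≤ 1 / Real.log m)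
    (hint : ∫ x in (1 / m ^ 2)..(2 / m), deriv (deriv φ) x = 1) :
    ∀ x : ℝ, |x| - 2 / m ≤ φ x ∧ φ x ≤ |x| := by
  have hm0 : (0:ℝ) < m := by linarith
  set a : ℝ := 1 / m ^ 2 with ha
  set b : ℝ := 2 / m with hb
  have ha0 : 0 < a := by positivity
  have hab : a ≤ b := by
    rw [ha, hb, div_le_div_iff₀ (by positivity) hm0]
    nlinarith
  have hb0 : 0 < b := lt_of_lt_of_le ha0 hab
  -- smoothness facts
  have hd1 : Differentiable ℝ φ := hC2.differentiable two_ne_zero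
  have hsm := (contDiff_succ_iff_deriv (n := 1)).mp hC2
  have hsm2 := (contDiff_succ_iff_deriv (n := 0)).mp hsm.2.2
  have hd2 : Differentiable ℝ (deriv φ) := hsm2.1
  have hc2 : Continuous (deriv (deriv φ)) := contDiff_zero.mp hsm2.2.2
  have hInt : ∀ c d : ℝ, IntervalIntegrable (deriv (deriv φ)) volume c d :=
    fun c d => hc2.intervalIntegrable c d
  have hInt1 : ∀ c d : ℝ, IntervalIntegrable (deriv φ) volume c d :=
    fun c d => hd2.continuous.intervalIntegrable c d
  -- nonnegativity of φ''
  have hpos : ∀ x, 0 ≤ deriv (deriv φ) x := by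
    intro x
    rcases eq_or_ne x 0 with h | h
    · rw [h, hsupp 0 (by
        simp only [Set.mem_union, Set.mem_Icc, not_or, not_and_or, not_le]
        constructor
        · right; linarith
        · left; linarith)]
    · have h1 := (hbound x).1
      have h2 : 0 < |x| := abs_pos.mpr h
      nlinarith
  -- vanishing integrals
  have hzero_left : (∫ x in (0:ℝ)..a, deriv (deriv φ) x) = 0 := by
    rw [intervalIntegral.integral_of_le ha0.le, MeasureTheory.integral_Ioc_eq_integral_Ioo]
    apply MeasureTheory.setIntegral_eq_zero_of_forall_eq_zero
    intro x hx
    apply hsupp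
    simp only [Set.mem_union, Set.mem_Icc, not_or, not_and_or, not_le]
    exact ⟨Or.inr (by linarith [hx.1]), Or.inl hx.2⟩
  have hzero_right : ∀ M : ℝ, b ≤ M → (∫ x in b..M, deriv (deriv φ) x) = 0 := by
    intro M hM
    rw [intervalIntegral.integral_of_le hM]
    apply MeasureTheory.setIntegral_eq_zero_of_forall_eq_zero
    intro x hx
    apply hsupp
    simp only [Set.mem_union, Set.mem_Icc, not_or, not_and_or, not_le]
    exact ⟨Or.inr (by linarith [hx.1]), Or.inr hx.1⟩
  -- FTC for deriv φ
  have hF : ∀ x : ℝ, deriv φ x = ∫ t in (0:ℝ)..x, deriv (deriv φ) t := by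
    intro x
    rw [intervalIntegral.integral_deriv_eq_sub (fun t _ => hd2 t) (hInt 0 x), h0', sub_zero]
  have hFnonneg : ∀ x : ℝ, 0 ≤ x → 0 ≤ deriv φ x := by
    intro x hx
    rw [hF x]
    exact intervalIntegral.integral_nonneg hx fun t _ => hpos t
  have hFeq1 : ∀ x : ℝ, b ≤ x → deriv φ x = 1 := by
    intro x hx
    rw [hF x, ← intervalIntegral.integral_add_adjacent_intervals (hInt 0 a) (hInt a x),
      ← intervalIntegral.integral_add_adjacent_intervals (hInt a b) (hInt b x),
      hzero_left, hzero_right x hx, hint]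
    ring
  have hFle1 : ∀ x : ℝ, 0 ≤ x → deriv φ x ≤ 1 := by
    intro x hx
    set M : ℝ := max x b with hM
    have hxM : x ≤ M := le_max_left _ _
    have hbM : b ≤ M := le_max_right _ _
    have h1 : deriv φ M = 1 := hFeq1 M hbM
    have h2 : deriv φ x ≤ deriv φ M := by
      rw [hF x, hF M, ← intervalIntegral.integral_add_adjacent_intervals (hInt 0 x) (hInt x M)]
      have : 0 ≤ ∫ t in x..M, deriv (deriv φ) t :=
        intervalIntegral.integral_nonneg hxM fun t _ => hpos t
      linarith
    linarith
  -- FTC for φ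
  have hφ : ∀ x : ℝ, φ x = ∫ t in (0:ℝ)..x, deriv φ t := by
    intro x
    rw [intervalIntegral.integral_deriv_eq_sub (fun t _ => hd1 t) (hInt1 0 x), h0, sub_zero]
  -- main claim for nonnegative x
  have key : ∀ x : ℝ, 0 ≤ x → x - b ≤ φ x ∧ φ x ≤ x := by
    intro x hx
    have hφnn : 0 ≤ φ x := by
      rw [hφ x]
      exact intervalIntegral.integral_nonneg hx fun t ht => hFnonneg t ht.1
    have hup : φ x ≤ x := by
      rw [hφ x]
      calc (∫ t in (0:ℝ)..x, deriv φ t) ≤ ∫ t in (0:ℝ)..x, (1:ℝ) := by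
            apply intervalIntegral.integral_mono_on hx (hInt1 0 x) intervalIntegrable_const
            exact fun t ht => hFle1 t ht.1
        _ = x := by simp
    refine ⟨?_, hup⟩
    rcases le_or_gt x b with hxb | hxb
    · linarith
    · have h1 : φ x = (∫ t in (0:ℝ)..b, deriv φ t) + ∫ t in b..x, deriv φ t := by
        rw [hφ x, intervalIntegral.integral_add_adjacent_intervals (hInt1 0 b) (hInt1 b x)]
      have h2 : 0 ≤ ∫ t in (0:ℝ)..b, deriv φ t :=
        intervalIntegral.integral_nonneg hb0.le fun t ht => hFnonneg t ht.1
      have h3 : (∫ t in b..x, deriv φ t) = x - b := by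
        rw [intervalIntegral.integral_congr (g := fun _ => (1:ℝ))
          (fun t ht => hFeq1 t (by
            rw [Set.uIcc_of_le hxb.le] at ht
            exact ht.1))]
        simp
      linarith
  intro x
  rcases le_or_gt 0 x with hx | hx
  · rw [abs_of_nonneg hx]
    exact key x hx
  · rw [abs_of_neg hx, ← heven x]
    exact key (-x) (by linarith)
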